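/- Let $[m] = \bigcup_{i \in [k]} X_i$ with the $X_i$ pairwise disjoint of size $n$, each with minimum element $v_i$. Suppose $\mathcal{F} \subseteq \mathcal{H}(n,k,\ell)$ and $\mathcal{G} \subseteq \mathcal{H}(n,k,\ell')$ are shifted cross $t$-intersecting separated families. Then $\mathcal{A}(\mathcal{F})$ and $\mathcal{A}(\mathcal{G})$ are cross $t$-intersecting families of subsets of $[k]$ of sizes at most $\ell$ and $\ell'$ respectively. -/

import Mathlib

open Classical

/-- The `i`-th block `X_i` of size `n`: `X_i = ((i-1)n, i n]`. -/
def Xblock (n i : ℕ) : Finset ℕ := Finset.Ioc ((i - 1) * n) (i * n)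

/-- The minimum element `v_i` of block `X_i`. -/
def vmin (n i : ℕ) : ℕ := (i - 1) * n + 1

/-- The separated families `H(n, k, l)`. -/
noncomputable def Hfam (n k l : ℕ) : Finset (Finset ℕ) :=
  (Finset.Icc 1 (n * k)).powerset.filter
    (fun S => S.card = l ∧ ∀ i ∈ Finset.Icc 1 k, (S ∩ Xblock n i).card ≤ 1)

/-- `A(H)` : indices of blocks in which `H` consists exactly of the minimal element. -/
def Aset (n k : ℕ) (H : Finset ℕ) : Finset ℕ :=
  (Finset.Icc 1 k).filter (fun i => H ∩ Xblock n i = {vmin n i})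

/-- The shifting operator `s_{i,j}` applied to a family of finite sets. -/
def shiftFam (i j : ℕ) (F : Finset (Finset ℕ)) : Finset (Finset ℕ) :=
  F.image (fun A => if j ∈ A ∧ i ∉ A ∧ insert i (A.erase j) ∉ F then insert i (A.erase j) else A)

lemma mem_Xblock {n i x : ℕ} : x ∈ Xblock n i ↔ (i - 1) * n < x ∧ x ≤ i * n := Finset.mem_Ioc

lemma vmin_mem_Xblock {n i : ℕ} (hn : 1 ≤ n) (hi : 1 ≤ i) : vmin n i ∈ Xblock n i := by
  have : (i - 1) * n + n = i * n := by
    have : i - 1 + 1 = i := Nat.succ_pred_eq_of_pos hi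
    calc (i-1) * n + n = (i - 1 + 1) * n := by ring
    _ = i * n := by rw [this]
  simp only [mem_Xblock, vmin]
  omega

lemma vmin_le_of_mem {n i x : ℕ} (hx : x ∈ Xblock n i) : vmin n i ≤ x := by
  simp only [mem_Xblock] at hx; simp only [vmin]; omega

lemma block_unique {n i j x : ℕ} (hi : 1 ≤ i) (hj : 1 ≤ j)
    (hxi : x ∈ Xblock n i) (hxj : x ∈ Xblock n j) : i = j := by
  simp only [mem_Xblock] at hxi hxj
  by_contra hne
  rcases Nat.lt_or_ge i j with h | h
  · have h1 : i * n ≤ (j - 1) * n := Nat.mul_le_mul_right n (by omega)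
    omega
  · have h2 : j < i := by omega
    have h1 : j * n ≤ (i - 1) * n := Nat.mul_le_mul_right n (by omega)
    omega

def blockOf (n x : ℕ) : ℕ := (x - 1) / n + 1

lemma blockOf_spec {n k x : ℕ} (hn : 1 ≤ n) (hx : x ∈ Finset.Icc 1 (n * k)) :
    blockOf n x ∈ Finset.Icc 1 k ∧ x ∈ Xblock n (blockOf n x) := by
  simp only [Finset.mem_Icc] at hx
  have hd := Nat.div_add_mod (x - 1) n
  have hm : (x - 1) % n < n := Nat.mod_lt _ (by omega)
  have hc : n * ((x - 1) / n) = ((x - 1) / n) * n := Nat.mul_comm _ _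
  have hqk : (x - 1) / n < k := Nat.div_lt_of_lt_mul (by omega)
  constructor
  · simp only [Finset.mem_Icc, blockOf]
    exact ⟨Nat.succ_le_succ (Nat.zero_le _), hqk⟩
  · simp only [mem_Xblock, blockOf]
    have h1 : ((x - 1) / n + 1 - 1) * n = ((x - 1) / n) * n := by norm_num
    have h2 : ((x - 1) / n + 1) * n = ((x - 1) / n) * n + n := by ring
    omega

lemma vmin_injOn {n i j : ℕ} (hn : 1 ≤ n) (hi : 1 ≤ i) (hj : 1 ≤ j)
    (h : vmin n i = vmin n j) : i = j := by
  simp only [vmin] at h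
  have h2 : (i - 1) * n = (j - 1) * n := Nat.add_right_cancel h
  have : i - 1 = j - 1 := Nat.eq_of_mul_eq_mul_right (by omega) h2
  omega

lemma mem_Hfam {n k l : ℕ} {S : Finset ℕ} :
    S ∈ Hfam n k l ↔ S ⊆ Finset.Icc 1 (n * k) ∧ S.card = l ∧
      ∀ i ∈ Finset.Icc 1 k, (S ∩ Xblock n i).card ≤ 1 := by
  simp [Hfam, and_assoc]

lemma mem_Aset {n k i : ℕ} {H : Finset ℕ} :
    i ∈ Aset n k H ↔ i ∈ Finset.Icc 1 k ∧ H ∩ Xblock n i = {vmin n i} := by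
  simp [Aset]

lemma shift_mem {i j : ℕ} {F : Finset (Finset ℕ)} {A : Finset ℕ}
    (hshift : shiftFam i j F = F) (hA : A ∈ F) (hj : j ∈ A) (hi : i ∉ A) :
    insert i (A.erase j) ∈ F := by
  by_contra h
  have : (if j ∈ A ∧ i ∉ A ∧ insert i (A.erase j) ∉ F then insert i (A.erase j) else A) ∈ shiftFam i j F :=
    Finset.mem_image_of_mem _ hA
  rw [if_pos ⟨hj, hi, h⟩, hshift] at this
  exact h this

lemma Aset_card_le {n k : ℕ} (hn : 1 ≤ n) {H : Finset ℕ} :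
    (Aset n k H).card ≤ H.card := by
  apply Finset.card_le_card_of_injOn (fun i => vmin n i)
  · intro i hi
    simp only [Finset.mem_coe, Aset, Finset.mem_filter, Finset.mem_Icc] at hi
    have : vmin n i ∈ H ∩ Xblock n i := by rw [hi.2]; exact Finset.mem_singleton_self _
    exact (Finset.mem_inter.mp this).1
  · intro i hi j hj h
    simp only [Finset.coe_filter, Set.mem_setOf_eq, Aset, Finset.mem_coe, Finset.mem_filter,
      Finset.mem_Icc] at hi hj
    exact vmin_injOn hn hi.1.1 hj.1.1 h

lemma inter_block_singleton {n i x : ℕ} {H : Finset ℕ}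
    (hcard : (H ∩ Xblock n i).card ≤ 1) (hx : x ∈ H) (hxi : x ∈ Xblock n i) :
    H ∩ Xblock n i = {x} := by
  apply Finset.eq_singleton_iff_unique_mem.mpr
  refine ⟨Finset.mem_inter.mpr ⟨hx, hxi⟩, ?_⟩
  intro y hy
  exact Finset.card_le_one.mp hcard _ hy _ (Finset.mem_inter.mpr ⟨hx, hxi⟩)

/-- the set of "bad blocks" for a pair of sets -/
def Dbad (n k : ℕ) (F B : Finset ℕ) : Finset ℕ :=
  (Finset.Icc 1 k).filter
    (fun i => (F ∩ B ∩ Xblock n i).Nonempty ∧ i ∉ Aset n k F ∩ Aset n k B)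

lemma count_lemma {n k : ℕ} (hn : 1 ≤ n) {F B : Finset ℕ}
    (hFsub : F ⊆ Finset.Icc 1 (n * k))
    (hFblock : ∀ i ∈ Finset.Icc 1 k, (F ∩ Xblock n i).card ≤ 1)
    (hD : Dbad n k F B = ∅) :
    (F ∩ B).card ≤ (Aset n k F ∩ Aset n k B).card := by
  have hval : ∀ x ∈ F ∩ B, blockOf n x ∈ Aset n k F ∩ Aset n k B ∧ x = vmin n (blockOf n x) := by
    intro x hx
    have hxF := (Finset.mem_inter.mp hx).1
    obtain ⟨hb1, hb2⟩ := blockOf_spec hn (hFsub hxF)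
    have hnotbad : blockOf n x ∉ Dbad n k F B := by rw [hD]; exact Finset.notMem_empty _
    simp only [Dbad, Finset.mem_filter, not_and, not_not] at hnotbad
    have hmem : blockOf n x ∈ Aset n k F ∩ Aset n k B :=
      hnotbad hb1 ⟨x, Finset.mem_inter.mpr ⟨hx, hb2⟩⟩
    refine ⟨hmem, ?_⟩
    have hA := (Finset.mem_inter.mp hmem).1
    rw [mem_Aset] at hA
    have : x ∈ F ∩ Xblock n (blockOf n x) := Finset.mem_inter.mpr ⟨hxF, hb2⟩
    rw [hA.2, Finset.mem_singleton] at this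
    exact this
  apply Finset.card_le_card_of_injOn (fun x => blockOf n x)
  · intro x hx; exact (hval x hx).1
  · intro x hx y hy h
    have h' : blockOf n x = blockOf n y := h
    have h1 := (hval x (Finset.mem_coe.mp hx)).2
    have h2 := (hval y (Finset.mem_coe.mp hy)).2
    rw [h1, h2, h']

lemma key_lemma (n k t : ℕ) (hn : 1 ≤ n) (G : Finset (Finset ℕ))
    (hGshift : ∀ i j, i < j → (∃ b ∈ Finset.Icc 1 k, i ∈ Xblock n b ∧ j ∈ Xblock n b) →
      shiftFam i j G = G)
    (hGsub : ∀ B ∈ G, B ⊆ Finset.Icc 1 (n * k) ∧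
      ∀ i ∈ Finset.Icc 1 k, (B ∩ Xblock n i).card ≤ 1)
    (F : Finset ℕ) (hFsub : F ⊆ Finset.Icc 1 (n * k))
    (hFblock : ∀ i ∈ Finset.Icc 1 k, (F ∩ Xblock n i).card ≤ 1)
    (hcross : ∀ B ∈ G, t ≤ (F ∩ B).card) :
    ∀ d, ∀ B ∈ G, (Dbad n k F B).card ≤ d → t ≤ (Aset n k F ∩ Aset n k B).card := by
  intro d
  induction d with
  | zero =>
    intro B hB hD
    have hDe : Dbad n k F B = ∅ := Finset.card_eq_zero.mp (Nat.le_zero.mp hD)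
    exact le_trans (hcross B hB) (count_lemma hn hFsub hFblock hDe)
  | succ d ih =>
    intro B hB hD
    rcases Finset.eq_empty_or_nonempty (Dbad n k F B) with hDe | ⟨i, hi⟩
    · exact le_trans (hcross B hB) (count_lemma hn hFsub hFblock hDe)
    · simp only [Dbad, Finset.mem_filter] at hi
      obtain ⟨hik, ⟨x, hx⟩, hiA⟩ := hi
      have hik' : 1 ≤ i := (Finset.mem_Icc.mp hik).1
      rw [Finset.mem_inter, Finset.mem_inter] at hx
      obtain ⟨⟨hxF, hxB⟩, hxi⟩ := hx
      have hFx : F ∩ Xblock n i = {x} := inter_block_singleton (hFblock i hik) hxF hxi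
      have hBx : B ∩ Xblock n i = {x} :=
        inter_block_singleton ((hGsub B hB).2 i hik) hxB hxi
      have hvXi : vmin n i ∈ Xblock n i := vmin_mem_Xblock hn hik'
      have hxv : x ≠ vmin n i := by
        intro h
        apply hiA
        rw [Finset.mem_inter, mem_Aset, mem_Aset]
        rw [h] at hFx hBx
        exact ⟨⟨hik, hFx⟩, ⟨hik, hBx⟩⟩
      have hlt : vmin n i < x := lt_of_le_of_ne (vmin_le_of_mem hxi) (Ne.symm hxv)
      have hvB : vmin n i ∉ B := by
        intro h
        have : vmin n i ∈ B ∩ Xblock n i := Finset.mem_inter.mpr ⟨h, hvXi⟩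
        rw [hBx, Finset.mem_singleton] at this
        exact hxv this.symm
      set B' := insert (vmin n i) (B.erase x) with hB'def
      have hB' : B' ∈ G :=
        shift_mem (hGshift (vmin n i) x hlt ⟨i, hik, hvXi, hxi⟩) hB hxB hvB
      -- blocks of B'
      have hB'i : B' ∩ Xblock n i = {vmin n i} := by
        ext y
        simp only [hB'def, Finset.mem_inter, Finset.mem_insert, Finset.mem_erase,
          Finset.mem_singleton]
        constructor
        · rintro ⟨hy1 | ⟨hyx, hyB⟩, hyXi⟩
          · exact hy1
          · exfalso
            have : y ∈ B ∩ Xblock n i := Finset.mem_inter.mpr ⟨hyB, hyXi⟩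
            rw [hBx, Finset.mem_singleton] at this
            exact hyx this
        · rintro rfl; exact ⟨Or.inl rfl, hvXi⟩
      have hB'j : ∀ j, j ∈ Finset.Icc 1 k → j ≠ i → B' ∩ Xblock n j = B ∩ Xblock n j := by
        intro j hjk hji
        have hjk' : 1 ≤ j := (Finset.mem_Icc.mp hjk).1
        ext y
        simp only [hB'def, Finset.mem_inter, Finset.mem_insert, Finset.mem_erase]
        constructor
        · rintro ⟨hy1 | ⟨hyx, hyB⟩, hyXj⟩
          · exact absurd (block_unique hjk' hik' (hy1 ▸ hyXj) hvXi) hji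
          · exact ⟨hyB, hyXj⟩
        · rintro ⟨hyB, hyXj⟩
          refine ⟨Or.inr ⟨?_, hyB⟩, hyXj⟩
          rintro rfl
          exact hji (block_unique hjk' hik' hyXj hxi)
      have hiAF : i ∉ Aset n k F := by
        rw [mem_Aset]
        rintro ⟨-, h⟩
        rw [hFx] at h
        exact hxv (Finset.singleton_injective h)
      -- A-sets agree
      have hAeq : Aset n k F ∩ Aset n k B' = Aset n k F ∩ Aset n k B := by
        ext j
        simp only [Finset.mem_inter]
        by_cases hji : j = i
        · subst hji
          constructor
          · rintro ⟨hF', -⟩; exact absurd hF' hiAF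
          · rintro ⟨hF', -⟩; exact absurd hF' hiAF
        · have hbb : j ∈ Aset n k B' ↔ j ∈ Aset n k B := by
            rw [mem_Aset, mem_Aset]
            constructor
            · rintro ⟨hjk, hb⟩
              rw [hB'j j hjk hji] at hb
              exact ⟨hjk, hb⟩
            · rintro ⟨hjk, hb⟩
              rw [← hB'j j hjk hji] at hb
              exact ⟨hjk, hb⟩
          exact and_congr_right (fun _ => hbb)
      -- Dbad shrinks
      have hDsub : Dbad n k F B' ⊆ (Dbad n k F B).erase i := by
        intro c hc
        simp only [Dbad, Finset.mem_filter] at hc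
        obtain ⟨hck, ⟨y, hy⟩, hcA⟩ := hc
        have hci : c ≠ i := by
          intro heq
          rw [heq, Finset.inter_assoc, hB'i] at hy
          rw [Finset.mem_inter, Finset.mem_singleton] at hy
          obtain ⟨hyF, hye⟩ := hy
          rw [hye] at hyF
          have hvF : vmin n i ∈ F ∩ Xblock n i := Finset.mem_inter.mpr ⟨hyF, hvXi⟩
          rw [hFx, Finset.mem_singleton] at hvF
          exact hxv hvF.symm
        rw [Finset.mem_erase]
        refine ⟨hci, ?_⟩
        simp only [Dbad, Finset.mem_filter]
        rw [Finset.inter_assoc, hB'j c hck hci, ← Finset.inter_assoc] at hy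
        rw [hAeq] at hcA
        exact ⟨hck, ⟨y, hy⟩, hcA⟩
      have hDcard : (Dbad n k F B').card ≤ d := by
        have h1 : i ∈ Dbad n k F B := by
          simp only [Dbad, Finset.mem_filter]
          exact ⟨hik, ⟨x, by rw [Finset.mem_inter, Finset.mem_inter]; exact ⟨⟨hxF, hxB⟩, hxi⟩⟩, hiA⟩
        have h2 := Finset.card_le_card hDsub
        have h3 := Finset.card_erase_of_mem h1
        have h4 : 1 ≤ (Dbad n k F B).card := Finset.card_pos.mpr ⟨i, h1⟩
        omega
      have := ih B' hB' hDcard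
      rwa [hAeq] at this

theorem reduction_lemma (n k l l' t : ℕ)
    (hn : 1 ≤ n) (hkl : l ≤ k) (hll : l' ≤ l) (ht : 1 ≤ t)
    (F G : Finset (Finset ℕ))
    (hF : F ⊆ Hfam n k l) (hG : G ⊆ Hfam n k l')
    (hFshift : ∀ i j, i < j → (∃ b ∈ Finset.Icc 1 k, i ∈ Xblock n b ∧ j ∈ Xblock n b) →
      shiftFam i j F = F)
    (hGshift : ∀ i j, i < j → (∃ b ∈ Finset.Icc 1 k, i ∈ Xblock n b ∧ j ∈ Xblock n b) →
      shiftFam i j G = G)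
    (hcross : ∀ A ∈ F, ∀ B ∈ G, t ≤ (A ∩ B).card) :
    (∀ A ∈ F.image (Aset n k), A ⊆ Finset.Icc 1 k ∧ A.card ≤ l) ∧
    (∀ B ∈ G.image (Aset n k), B ⊆ Finset.Icc 1 k ∧ B.card ≤ l') ∧
    (∀ A ∈ F.image (Aset n k), ∀ B ∈ G.image (Aset n k), t ≤ (A ∩ B).card) := by
  have hGsub : ∀ B ∈ G, B ⊆ Finset.Icc 1 (n * k) ∧
      ∀ i ∈ Finset.Icc 1 k, (B ∩ Xblock n i).card ≤ 1 := by
    intro B hB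
    have hm := mem_Hfam.mp (hG hB)
    exact ⟨hm.1, hm.2.2⟩
  refine ⟨?_, ?_, ?_⟩
  · intro A hA
    obtain ⟨H, hH, rfl⟩ := Finset.mem_image.mp hA
    have hm := mem_Hfam.mp (hF hH)
    exact ⟨Finset.filter_subset _ _, le_trans (Aset_card_le hn) (le_of_eq hm.2.1)⟩
  · intro B hB
    obtain ⟨H, hH, rfl⟩ := Finset.mem_image.mp hB
    have hm := mem_Hfam.mp (hG hH)
    exact ⟨Finset.filter_subset _ _, le_trans (Aset_card_le hn) (le_of_eq hm.2.1)⟩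
  · intro A hA B hB
    obtain ⟨Hf, hHf, rfl⟩ := Finset.mem_image.mp hA
    obtain ⟨Hg, hHg, rfl⟩ := Finset.mem_image.mp hB
    have hm := mem_Hfam.mp (hF hHf)
    exact key_lemma n k t hn G hGshift hGsub Hf hm.1 hm.2.2
      (fun B hB => hcross Hf hHf B hB) ((Dbad n k Hf Hg).card) Hg hHg le_rfl
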